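/- arXiv:2408.06898 — 2 statements merged into one kernel-verified Lean document; each statement's English description precedes it below -/
import Mathlib

section
/- Consider the 2N × 2N SSH-type tridiagonal matrix H(v,w) with zero diagonal and alternating off-diagonal entries v, w, v, w, ..., v (N entries equal to v in odd positions, N−1 equal to w), with v, w real, v ≠ 0, w ≠ 0. If |v| < |w|, then H(v,w) has an eigenvalue λ_N with |λ_N| ≤ C·(|v|/|w|)^N for some constant C independent of N; in particular, as N → ∞ the smallest singular value of H(v,w) tends to 0. -/
open Module

/-- The 2N×2N SSH-type tridiagonal matrix with zero diagonal and alternating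
off-diagonal entries v, w, v, w, …, v (entry between sites k and k+1 is v for even k,
w for odd k, 0-indexed). -/
def sshMatrix (N : ℕ) (v w : ℝ) : Matrix (Fin (2 * N)) (Fin (2 * N)) ℝ :=
  Matrix.of fun i j =>
    if (i : ℕ) + 1 = (j : ℕ) ∨ (j : ℕ) + 1 = (i : ℕ) then
      (if (min (i : ℕ) (j : ℕ)) % 2 = 0 then v else w)
    else 0

namespace SSHProof

/-- The edge-state trial vector: `r^k` on even sites `2k`, zero on odd sites. -/
noncomputable def trial (N : ℕ) (r : ℝ) : EuclideanSpace ℝ (Fin (2 * N)) :=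
  (WithLp.equiv 2 (Fin (2 * N) → ℝ)).symm
    (fun j => if (j : ℕ) % 2 = 0 then r ^ ((j : ℕ) / 2) else 0)

lemma trial_apply (N : ℕ) (r : ℝ) (j : Fin (2 * N)) :
    trial N r j = if (j : ℕ) % 2 = 0 then r ^ ((j : ℕ) / 2) else 0 := rfl

lemma ssh_isHermitian (N : ℕ) (v w : ℝ) : (sshMatrix N v w).IsHermitian := by
  ext i j
  simp only [sshMatrix, Matrix.conjTranspose_apply, Matrix.of_apply, star_trivial]
  split_ifs <;> first | rfl | omega

lemma mulVec_trial (N : ℕ) (hN : 1 ≤ N) (v w : ℝ) (hw : w ≠ 0) :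
    (sshMatrix N v w).mulVec ((WithLp.equiv 2 (Fin (2 * N) → ℝ)) (trial N (-v / w))) =
      fun i : Fin (2 * N) =>
        if (i : ℕ) = 2 * N - 1 then v * (-v / w) ^ (N - 1) else 0 := by
  set r := -v / w with hr
  have key : w * r = -v := by
    rw [hr]
    field_simp
  funext i
  have hilt : (i : ℕ) < 2 * N := i.isLt
  show (∑ j, sshMatrix N v w i j *
      (if (j : ℕ) % 2 = 0 then r ^ ((j : ℕ) / 2) else 0)) = _
  rcases Nat.even_or_odd (i : ℕ) with hi | hi
  · obtain ⟨a, ha⟩ := hi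
    rw [if_neg (by omega)]
    apply Finset.sum_eq_zero
    intro j _
    rcases Nat.even_or_odd (j : ℕ) with hj | hj
    · obtain ⟨b, hb⟩ := hj
      have hcond : ¬((i : ℕ) + 1 = (j : ℕ) ∨ (j : ℕ) + 1 = (i : ℕ)) := by omega
      simp [sshMatrix, hcond]
    · obtain ⟨b, hb⟩ := hj
      rw [if_neg (by omega), mul_zero]
  · obtain ⟨k, hk⟩ := hi
    have hk2 : 2 * k + 1 < 2 * N := by omega
    set a : Fin (2 * N) := ⟨2 * k, by omega⟩ with hadef
    have haval : (a : ℕ) = 2 * k := rfl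
    have hterma : sshMatrix N v w i a *
        (if (a : ℕ) % 2 = 0 then r ^ ((a : ℕ) / 2) else 0) = v * r ^ k := by
      have hcond : (i : ℕ) + 1 = (a : ℕ) ∨ (a : ℕ) + 1 = (i : ℕ) := Or.inr (by omega)
      simp only [sshMatrix, Matrix.of_apply, if_pos hcond]
      rw [show min (i : ℕ) (a : ℕ) = 2 * k by omega,
        show ((a : ℕ)) / 2 = k by omega, show ((a : ℕ)) % 2 = 0 by omega]
      simp [Nat.mul_mod_right]
    by_cases hlast : k + 1 = N
    · -- last row: only the left neighbor contributes
      rw [if_pos (by omega)]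
      rw [Finset.sum_eq_single a]
      · rw [hterma]
        congr 2
        omega
      · intro j _ hja
        by_cases hcond : (i : ℕ) + 1 = (j : ℕ) ∨ (j : ℕ) + 1 = (i : ℕ)
        · exfalso
          have hjlt : (j : ℕ) < 2 * N := j.isLt
          have : (j : ℕ) = 2 * k := by omega
          exact hja (Fin.ext (by omega))
        · simp [sshMatrix, hcond]
      · intro h
        exact absurd (Finset.mem_univ a) h
    · -- interior odd row: left and right neighbors cancel
      rw [if_neg (by omega)]
      set b : Fin (2 * N) := ⟨2 * k + 2, by omega⟩ with hbdef
      have hbval : (b : ℕ) = 2 * k + 2 := rfl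
      have hab : a ≠ b := by
        intro h
        have h2 := congrArg Fin.val h
        omega
      have hsub : (∑ j, sshMatrix N v w i j *
          (if (j : ℕ) % 2 = 0 then r ^ ((j : ℕ) / 2) else 0)) =
          ∑ j ∈ ({a, b} : Finset (Fin (2 * N))), sshMatrix N v w i j *
          (if (j : ℕ) % 2 = 0 then r ^ ((j : ℕ) / 2) else 0) := by
        refine (Finset.sum_subset (Finset.subset_univ _) ?_).symm
        intro j _ hj
        rw [Finset.mem_insert, Finset.mem_singleton] at hj
        push_neg at hj
        by_cases hcond : (i : ℕ) + 1 = (j : ℕ) ∨ (j : ℕ) + 1 = (i : ℕ)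
        · exfalso
          rcases hcond with h1 | h1
          · exact hj.2 (Fin.ext (by omega))
          · exact hj.1 (Fin.ext (by omega))
        · simp [sshMatrix, hcond]
      rw [hsub, Finset.sum_pair hab, hterma]
      have htermb : sshMatrix N v w i b *
          (if (b : ℕ) % 2 = 0 then r ^ ((b : ℕ) / 2) else 0) = w * r ^ (k + 1) := by
        have hcond : (i : ℕ) + 1 = (b : ℕ) ∨ (b : ℕ) + 1 = (i : ℕ) := Or.inl (by omega)
        simp only [sshMatrix, Matrix.of_apply, if_pos hcond]
        rw [show min (i : ℕ) (b : ℕ) = 2 * k + 1 by omega,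
          show ((b : ℕ)) / 2 = k + 1 by omega, show ((b : ℕ)) % 2 = 0 by omega]
        rw [if_neg (by omega), if_pos rfl]
      rw [htermb, pow_succ, ← mul_assoc, mul_comm w (r ^ k), mul_assoc, key]
      ring

lemma one_le_norm_trial (N : ℕ) (hN : 1 ≤ N) (r : ℝ) : 1 ≤ ‖trial N r‖ := by
  rw [EuclideanSpace.norm_eq]
  rw [show (1 : ℝ) = Real.sqrt 1 by simp]
  apply Real.sqrt_le_sqrt
  have h0 : (1 : ℝ) = ‖trial N r ⟨0, by omega⟩‖ ^ 2 := by
    rw [trial_apply]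
    norm_num
  rw [h0]
  exact Finset.single_le_sum (f := fun j => ‖trial N r j‖ ^ 2)
    (fun j _ => sq_nonneg _) (Finset.mem_univ _)

lemma trial_ne_zero (N : ℕ) (hN : 1 ≤ N) (r : ℝ) : trial N r ≠ 0 := by
  intro h
  have := one_le_norm_trial N hN r
  rw [h, norm_zero] at this
  linarith

/-- For a Hermitian real matrix, there is an eigenvalue whose absolute value is at most
the residual `‖A x‖` for any vector of norm at least one. -/
lemma exists_eigenvalue_le {n : ℕ} [NeZero n] (A : Matrix (Fin n) (Fin n) ℝ)
    (hA : A.IsHermitian) (x : EuclideanSpace ℝ (Fin n)) (hx1 : 1 ≤ ‖x‖) {ε : ℝ}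
    (hres : ‖Matrix.toEuclideanLin A x‖ ≤ ε) :
    ∃ lam : ℝ, Module.End.HasEigenvalue (Matrix.toLin' A) lam ∧ |lam| ≤ ε := by
  obtain ⟨i0, -, hmin⟩ := Finset.exists_min_image Finset.univ
    (fun i => |hA.eigenvalues i|)
    ⟨⟨0, Nat.pos_of_ne_zero (NeZero.ne n)⟩, Finset.mem_univ _⟩
  set b := hA.eigenvectorBasis with hb
  set lam := hA.eigenvalues with hlam
  refine ⟨lam i0, ?_, ?_⟩
  · apply Module.End.hasEigenvalue_of_hasEigenvector
      (x := (WithLp.equiv 2 (Fin n → ℝ)) (b i0))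
    constructor
    · rw [Module.End.mem_eigenspace_iff, Matrix.toLin'_apply]
      exact hA.mulVec_eigenvectorBasis i0
    · intro h
      apply b.orthonormal.ne_zero i0
      exact (WithLp.equiv 2 (Fin n → ℝ)).injective h
  · -- min |eigenvalue| is bounded by the residual
    have hsym := Matrix.isHermitian_iff_isSymmetric.mp hA
    have heig : ∀ j, Matrix.toEuclideanLin A (b j) = lam j • b j := by
      intro j
      apply (WithLp.equiv 2 (Fin n → ℝ)).injective
      have := hA.mulVec_eigenvectorBasis j
      show Matrix.toLin' A ((WithLp.equiv 2 (Fin n → ℝ)) (b j)) = _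
      rw [Matrix.toLin'_apply]
      exact this
    have hrepr : ∀ j, b.repr (Matrix.toEuclideanLin A x) j = lam j * b.repr x j := by
      intro j
      rw [b.repr_apply_apply, b.repr_apply_apply, ← hsym (b j) x, heig j,
        real_inner_smul_left]
    have key2 : |lam i0| * ‖x‖ ≤ ‖Matrix.toEuclideanLin A x‖ := by
      have h2 : (|lam i0| * ‖x‖) ^ 2 ≤ ‖Matrix.toEuclideanLin A x‖ ^ 2 := by
        rw [mul_pow, ← b.repr.norm_map x, ← b.repr.norm_map (Matrix.toEuclideanLin A x),
          EuclideanSpace.norm_eq, EuclideanSpace.norm_eq,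
          Real.sq_sqrt (by positivity), Real.sq_sqrt (by positivity), Finset.mul_sum]
        apply Finset.sum_le_sum
        intro j _
        rw [hrepr j, Real.norm_eq_abs, Real.norm_eq_abs, abs_mul, mul_pow]
        have hj : |lam i0| ≤ |lam j| := hmin j (Finset.mem_univ j)
        have := pow_le_pow_left₀ (abs_nonneg (lam i0)) hj 2
        nlinarith [sq_nonneg (|b.repr x j|), sq_abs (b.repr x j)]
      exact le_of_pow_le_pow_left₀ two_ne_zero (norm_nonneg _) h2
    calc |lam i0| = |lam i0| * 1 := (mul_one _).symm
      _ ≤ |lam i0| * ‖x‖ := by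
          exact mul_le_mul_of_nonneg_left hx1 (abs_nonneg _)
      _ ≤ ‖Matrix.toEuclideanLin A x‖ := key2
      _ ≤ ε := hres

end SSHProof

open SSHProof in
/-- in the topological phase |v| < |w|, the finite SSH matrix has an
eigenvalue exponentially small in N (uniform constant C), and consequently its smallest
singular value tends to 0 as N → ∞. -/
theorem ssh_near_zero_eigenvalue (v w : ℝ) (hv : v ≠ 0) (hw : w ≠ 0) (hvw : |v| < |w|) :
    (∃ C : ℝ, 0 < C ∧ ∀ N : ℕ, 1 ≤ N → ∃ lam : ℝ,
        Module.End.HasEigenvalue (Matrix.toLin' (sshMatrix N v w)) lam ∧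
        |lam| ≤ C * (|v| / |w|) ^ N) ∧
    Filter.Tendsto
      (fun N : ℕ =>
        ⨅ x : {x : EuclideanSpace ℝ (Fin (2 * N)) // ‖x‖ = 1},
          ‖Matrix.toEuclideanLin (sshMatrix N v w) x.1‖)
      Filter.atTop (nhds 0) := by
  have hwpos : 0 < |w| := abs_pos.mpr hw
  have hrnn : (0 : ℝ) ≤ |v| / |w| := by positivity
  have hrlt : |v| / |w| < 1 := (div_lt_one hwpos).mpr hvw
  -- the residual bound
  have hres : ∀ N : ℕ, 1 ≤ N →
      ‖Matrix.toEuclideanLin (sshMatrix N v w) (trial N (-v / w))‖ =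
        |w| * (|v| / |w|) ^ N := by
    intro N hN
    have hT : Matrix.toEuclideanLin (sshMatrix N v w) (trial N (-v / w)) =
        EuclideanSpace.single (⟨2 * N - 1, by omega⟩ : Fin (2 * N))
          (v * (-v / w) ^ (N - 1)) := by
      apply (WithLp.equiv 2 (Fin (2 * N) → ℝ)).injective
      show Matrix.toLin' _ ((WithLp.equiv 2 (Fin (2 * N) → ℝ)) (trial N (-v / w))) = _
      rw [Matrix.toLin'_apply]
      rw [mulVec_trial N hN v w hw]
      funext j
      rw [show (WithLp.equiv 2 (Fin (2 * N) → ℝ))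
          (EuclideanSpace.single (⟨2 * N - 1, by omega⟩ : Fin (2 * N))
            (v * (-v / w) ^ (N - 1))) j =
          if j = (⟨2 * N - 1, by omega⟩ : Fin (2 * N)) then v * (-v / w) ^ (N - 1) else 0
        from EuclideanSpace.single_apply _ _ _]
      simp [Fin.ext_iff]
    rw [hT, EuclideanSpace.norm_single, Real.norm_eq_abs, abs_mul, abs_pow, abs_div,
      abs_neg]
    obtain ⟨M, rfl⟩ : ∃ M, N = M + 1 := ⟨N - 1, by omega⟩
    have hM : M + 1 - 1 = M := by omega
    have hwne : |w| ≠ 0 := ne_of_gt hwpos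
    rw [hM, pow_succ']
    field_simp
  constructor
  · refine ⟨|w|, hwpos, ?_⟩
    intro N hN
    haveI : NeZero (2 * N) := ⟨by omega⟩
    exact exists_eigenvalue_le (sshMatrix N v w) (ssh_isHermitian N v w)
      (trial N (-v / w)) (one_le_norm_trial N hN _)
      (le_of_eq (hres N hN))
  · have hbound : Filter.Tendsto (fun N : ℕ => |w| * (|v| / |w|) ^ N)
        Filter.atTop (nhds 0) := by
      have := (tendsto_pow_atTop_nhds_zero_of_lt_one hrnn hrlt).const_mul |w|
      simpa using this
    refine tendsto_of_tendsto_of_tendsto_of_le_of_le' tendsto_const_nhds hbound ?_ ?_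
    · exact Filter.Eventually.of_forall fun N =>
        Real.iInf_nonneg fun x => norm_nonneg _
    · rw [Filter.eventually_atTop]
      refine ⟨1, fun N hN => ?_⟩
      set x := trial N (-v / w) with hx
      have hx1 : 1 ≤ ‖x‖ := one_le_norm_trial N hN _
      have hxne : x ≠ 0 := trial_ne_zero N hN _
      have hxh : ‖(‖x‖⁻¹ • x : EuclideanSpace ℝ (Fin (2 * N)))‖ = 1 :=
        norm_smul_inv_norm hxne
      have hbdd : BddBelow (Set.range fun y : {y : EuclideanSpace ℝ (Fin (2 * N)) // ‖y‖ = 1} =>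
          ‖Matrix.toEuclideanLin (sshMatrix N v w) y.1‖) := by
        refine ⟨0, ?_⟩
        rintro t ⟨z, rfl⟩
        exact norm_nonneg _
      refine le_trans (ciInf_le hbdd ⟨‖x‖⁻¹ • x, hxh⟩) ?_
      have hmap : Matrix.toEuclideanLin (sshMatrix N v w) (‖x‖⁻¹ • x) =
          ‖x‖⁻¹ • Matrix.toEuclideanLin (sshMatrix N v w) x := map_smul _ _ _
      rw [hmap, norm_smul, norm_inv, norm_norm]
      have hinv : ‖x‖⁻¹ ≤ 1 := inv_le_one_of_one_le₀ hx1
      calc ‖x‖⁻¹ * ‖Matrix.toEuclideanLin (sshMatrix N v w) x‖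
          ≤ 1 * ‖Matrix.toEuclideanLin (sshMatrix N v w) x‖ :=
            mul_le_mul_of_nonneg_right hinv (norm_nonneg _)
        _ = ‖Matrix.toEuclideanLin (sshMatrix N v w) x‖ := one_mul _
        _ ≤ |w| * (|v| / |w|) ^ N := le_of_eq (hres N hN)
end

section
/- Let H(v,w) be the (2N)×(2N) tridiagonal matrix with zero diagonal and alternating off-diagonal entries v, w, ..., v (starting and ending with v). If |v| > |w| > 0, then H(v,w) is invertible and its smallest singular value is bounded below by |v| − |w| > 0, uniformly in N. -/
namespace SSHAux

def sigmaFun (N : ℕ) (i : Fin (2 * N)) : Fin (2 * N) :=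
  if h : (i : ℕ) % 2 = 0 then ⟨(i : ℕ) + 1, by have := i.isLt; omega⟩
  else ⟨(i : ℕ) - 1, by have := i.isLt; omega⟩

lemma sigmaFun_val (N : ℕ) (i : Fin (2 * N)) :
    (sigmaFun N i : ℕ) = if (i : ℕ) % 2 = 0 then (i : ℕ) + 1 else (i : ℕ) - 1 := by
  unfold sigmaFun; split <;> rfl

lemma sigmaFun_invol (N : ℕ) : Function.Involutive (sigmaFun N) := by
  intro i
  have h1 := sigmaFun_val N (sigmaFun N i)
  have h2 := sigmaFun_val N i
  have hlt := i.isLt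
  apply Fin.ext
  rw [h1, h2]
  split_ifs <;> omega

def dom (N : ℕ) (i : Fin (2 * N)) : Prop :=
  ((i : ℕ) % 2 = 0 ∧ 0 < (i : ℕ)) ∨ ((i : ℕ) % 2 = 1 ∧ (i : ℕ) + 1 < 2 * N)

instance (N : ℕ) (i : Fin (2 * N)) : Decidable (dom N i) := by
  unfold dom; infer_instance

def tauFun (N : ℕ) (i : Fin (2 * N)) : Fin (2 * N) :=
  if h : (i : ℕ) % 2 = 0 ∧ 0 < (i : ℕ) then ⟨(i : ℕ) - 1, by have := i.isLt; omega⟩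
  else if h2 : (i : ℕ) % 2 = 1 ∧ (i : ℕ) + 1 < 2 * N then ⟨(i : ℕ) + 1, h2.2⟩
  else i

lemma tauFun_val (N : ℕ) (i : Fin (2 * N)) :
    (tauFun N i : ℕ) =
      if (i : ℕ) % 2 = 0 ∧ 0 < (i : ℕ) then (i : ℕ) - 1
      else if (i : ℕ) % 2 = 1 ∧ (i : ℕ) + 1 < 2 * N then (i : ℕ) + 1 else (i : ℕ) := by
  unfold tauFun
  split
  · rfl
  · split <;> rfl

lemma tauFun_invol (N : ℕ) : Function.Involutive (tauFun N) := by
  intro i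
  have h1 := tauFun_val N (tauFun N i)
  have h2 := tauFun_val N i
  have hlt := i.isLt
  apply Fin.ext
  rw [h1, h2]
  split_ifs <;> omega

lemma mulVec_apply (N : ℕ) (v w : ℝ) (x : Fin (2 * N) → ℝ) (i : Fin (2 * N)) :
    (sshMatrix N v w).mulVec x i
      = v * x (sigmaFun N i) + (if dom N i then w * x (tauFun N i) else 0) := by
  have hN := i.isLt
  simp only [Matrix.mulVec, dotProduct]
  by_cases hpar : (i : ℕ) % 2 = 0
  · by_cases hpos : 0 < (i : ℕ)
    · rw [Finset.sum_eq_add_of_mem (⟨(i : ℕ) + 1, by omega⟩ : Fin (2 * N))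
        (⟨(i : ℕ) - 1, by omega⟩ : Fin (2 * N)) (Finset.mem_univ _) (Finset.mem_univ _)
        (by intro h; have : (i : ℕ) + 1 = (i : ℕ) - 1 := congrArg Fin.val h; omega)
        ?_]
      · have e1 : sshMatrix N v w i ⟨(i : ℕ) + 1, by omega⟩ = v := by
          show (if (i : ℕ) + 1 = (i : ℕ) + 1 ∨ (i : ℕ) + 1 + 1 = (i : ℕ) then
            (if (min (i : ℕ) ((i : ℕ) + 1)) % 2 = 0 then v else w) else 0) = v
          rw [if_pos (Or.inl rfl), if_pos (by omega)]
        have e2 : sshMatrix N v w i ⟨(i : ℕ) - 1, by omega⟩ = w := by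
          show (if (i : ℕ) + 1 = (i : ℕ) - 1 ∨ (i : ℕ) - 1 + 1 = (i : ℕ) then
            (if (min (i : ℕ) ((i : ℕ) - 1)) % 2 = 0 then v else w) else 0) = w
          rw [if_pos (Or.inr (by omega)), if_neg (by omega)]
        rw [e1, e2, if_pos (show dom N i from Or.inl ⟨hpar, hpos⟩)]
        have hs : sigmaFun N i = ⟨(i : ℕ) + 1, by omega⟩ := by
          unfold sigmaFun; rw [dif_pos hpar]
        have ht : tauFun N i = ⟨(i : ℕ) - 1, by omega⟩ := by
          unfold tauFun; rw [dif_pos ⟨hpar, hpos⟩]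
        rw [hs, ht]
      · intro c _ hc
        have h1 : (c : ℕ) ≠ (i : ℕ) + 1 := fun h => hc.1 (Fin.ext h)
        have h2 : (c : ℕ) ≠ (i : ℕ) - 1 := fun h => hc.2 (Fin.ext h)
        have hz : sshMatrix N v w i c = 0 := by
          show (if (i : ℕ) + 1 = (c : ℕ) ∨ (c : ℕ) + 1 = (i : ℕ) then
            (if (min (i : ℕ) (c : ℕ)) % 2 = 0 then v else w) else 0) = 0
          rw [if_neg (by omega)]
        rw [hz, zero_mul]
    · rw [Finset.sum_eq_single_of_mem (⟨(i : ℕ) + 1, by omega⟩ : Fin (2 * N))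
        (Finset.mem_univ _) ?_]
      · have e1 : sshMatrix N v w i ⟨(i : ℕ) + 1, by omega⟩ = v := by
          show (if (i : ℕ) + 1 = (i : ℕ) + 1 ∨ (i : ℕ) + 1 + 1 = (i : ℕ) then
            (if (min (i : ℕ) ((i : ℕ) + 1)) % 2 = 0 then v else w) else 0) = v
          rw [if_pos (Or.inl rfl), if_pos (by omega)]
        rw [e1, if_neg (show ¬ dom N i from by unfold dom; omega)]
        have hs : sigmaFun N i = ⟨(i : ℕ) + 1, by omega⟩ := by
          unfold sigmaFun; rw [dif_pos hpar]
        rw [hs]; ring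
      · intro c _ hc
        have h1 : (c : ℕ) ≠ (i : ℕ) + 1 := fun h => hc (Fin.ext h)
        have hz : sshMatrix N v w i c = 0 := by
          show (if (i : ℕ) + 1 = (c : ℕ) ∨ (c : ℕ) + 1 = (i : ℕ) then
            (if (min (i : ℕ) (c : ℕ)) % 2 = 0 then v else w) else 0) = 0
          rw [if_neg (by omega)]
        rw [hz, zero_mul]
  · by_cases hb : (i : ℕ) + 1 < 2 * N
    · rw [Finset.sum_eq_add_of_mem (⟨(i : ℕ) - 1, by omega⟩ : Fin (2 * N))
        (⟨(i : ℕ) + 1, by omega⟩ : Fin (2 * N)) (Finset.mem_univ _) (Finset.mem_univ _)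
        (by intro h; have : (i : ℕ) - 1 = (i : ℕ) + 1 := congrArg Fin.val h; omega)
        ?_]
      · have e1 : sshMatrix N v w i ⟨(i : ℕ) - 1, by omega⟩ = v := by
          show (if (i : ℕ) + 1 = (i : ℕ) - 1 ∨ (i : ℕ) - 1 + 1 = (i : ℕ) then
            (if (min (i : ℕ) ((i : ℕ) - 1)) % 2 = 0 then v else w) else 0) = v
          rw [if_pos (Or.inr (by omega)), if_pos (by omega)]
        have e2 : sshMatrix N v w i ⟨(i : ℕ) + 1, by omega⟩ = w := by
          show (if (i : ℕ) + 1 = (i : ℕ) + 1 ∨ (i : ℕ) + 1 + 1 = (i : ℕ) then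
            (if (min (i : ℕ) ((i : ℕ) + 1)) % 2 = 0 then v else w) else 0) = w
          rw [if_pos (Or.inl rfl), if_neg (by omega)]
        rw [e1, e2, if_pos (show dom N i from Or.inr ⟨by omega, hb⟩)]
        have hs : sigmaFun N i = ⟨(i : ℕ) - 1, by omega⟩ := by
          unfold sigmaFun; rw [dif_neg hpar]
        have ht : tauFun N i = ⟨(i : ℕ) + 1, by omega⟩ := by
          unfold tauFun; rw [dif_neg (by omega), dif_pos ⟨by omega, hb⟩]
        rw [hs, ht]
      · intro c _ hc
        have h1 : (c : ℕ) ≠ (i : ℕ) - 1 := fun h => hc.1 (Fin.ext h)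
        have h2 : (c : ℕ) ≠ (i : ℕ) + 1 := fun h => hc.2 (Fin.ext h)
        have hz : sshMatrix N v w i c = 0 := by
          show (if (i : ℕ) + 1 = (c : ℕ) ∨ (c : ℕ) + 1 = (i : ℕ) then
            (if (min (i : ℕ) (c : ℕ)) % 2 = 0 then v else w) else 0) = 0
          rw [if_neg (by omega)]
        rw [hz, zero_mul]
    · rw [Finset.sum_eq_single_of_mem (⟨(i : ℕ) - 1, by omega⟩ : Fin (2 * N))
        (Finset.mem_univ _) ?_]
      · have e1 : sshMatrix N v w i ⟨(i : ℕ) - 1, by omega⟩ = v := by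
          show (if (i : ℕ) + 1 = (i : ℕ) - 1 ∨ (i : ℕ) - 1 + 1 = (i : ℕ) then
            (if (min (i : ℕ) ((i : ℕ) - 1)) % 2 = 0 then v else w) else 0) = v
          rw [if_pos (Or.inr (by omega)), if_pos (by omega)]
        rw [e1, if_neg (show ¬ dom N i from by unfold dom; omega)]
        have hs : sigmaFun N i = ⟨(i : ℕ) - 1, by omega⟩ := by
          unfold sigmaFun; rw [dif_neg hpar]
        rw [hs]; ring
      · intro c _ hc
        have h1 : (c : ℕ) ≠ (i : ℕ) - 1 := fun h => hc (Fin.ext h)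
        have hz : sshMatrix N v w i c = 0 := by
          show (if (i : ℕ) + 1 = (c : ℕ) ∨ (c : ℕ) + 1 = (i : ℕ) then
            (if (min (i : ℕ) (c : ℕ)) % 2 = 0 then v else w) else 0) = 0
          rw [if_neg (by omega)]
        rw [hz, zero_mul]


lemma norm_bound (N : ℕ) (v w : ℝ) (x : EuclideanSpace ℝ (Fin (2 * N))) :
    (|v| - |w|) * ‖x‖ ≤ ‖Matrix.toEuclideanLin (sshMatrix N v w) x‖ := by
  classical
  set u : EuclideanSpace ℝ (Fin (2 * N)) :=
    (WithLp.equiv 2 _).symm (fun i => v * x (sigmaFun N i)) with hu_def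
  set z : EuclideanSpace ℝ (Fin (2 * N)) :=
    (WithLp.equiv 2 _).symm (fun i => if dom N i then w * x (tauFun N i) else 0) with hz_def
  have hdecomp : Matrix.toEuclideanLin (sshMatrix N v w) x = u + z := by
    ext i
    simp only [Matrix.toEuclideanLin_apply, WithLp.equiv_symm_apply, PiLp.toLp_apply, PiLp.add_apply,
      hu_def, hz_def]
    exact mulVec_apply N v w _ i
  have hsigma : ∑ i, ‖x (sigmaFun N i)‖ ^ 2 = ∑ i, ‖x i‖ ^ 2 := by
    exact Equiv.sum_comp ((sigmaFun_invol N).toPerm) (fun j => ‖x j‖ ^ 2)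
  have htau : ∑ i, ‖x (tauFun N i)‖ ^ 2 = ∑ i, ‖x i‖ ^ 2 := by
    exact Equiv.sum_comp ((tauFun_invol N).toPerm) (fun j => ‖x j‖ ^ 2)
  have hu : ‖u‖ = |v| * ‖x‖ := by
    rw [EuclideanSpace.norm_eq, EuclideanSpace.norm_eq]
    have h1 : ∑ i, ‖u i‖ ^ 2 = v ^ 2 * ∑ i, ‖x i‖ ^ 2 := by
      rw [← hsigma, Finset.mul_sum]
      refine Finset.sum_congr rfl fun i _ => ?_
      simp only [hu_def, WithLp.equiv_symm_apply, PiLp.toLp_apply, Real.norm_eq_abs, abs_mul, mul_pow, sq_abs]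
    rw [h1, Real.sqrt_mul (sq_nonneg v), Real.sqrt_sq_eq_abs]
  have hz : ‖z‖ ≤ |w| * ‖x‖ := by
    rw [EuclideanSpace.norm_eq, EuclideanSpace.norm_eq]
    have h1 : ∑ i, ‖z i‖ ^ 2 ≤ w ^ 2 * ∑ i, ‖x i‖ ^ 2 := by
      rw [← htau, Finset.mul_sum]
      refine Finset.sum_le_sum fun i _ => ?_
      simp only [hz_def, WithLp.equiv_symm_apply, PiLp.toLp_apply]
      by_cases h : dom N i
      · rw [if_pos h]
        simp only [Real.norm_eq_abs, abs_mul, mul_pow, sq_abs]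
        exact le_refl _
      · rw [if_neg h, norm_zero, show (0:ℝ)^2 = 0 by norm_num]
        positivity
    calc Real.sqrt (∑ i, ‖z i‖ ^ 2) ≤ Real.sqrt (w ^ 2 * ∑ i, ‖x i‖ ^ 2) :=
          Real.sqrt_le_sqrt h1
      _ = |w| * Real.sqrt (∑ i, ‖x i‖ ^ 2) := by
          rw [Real.sqrt_mul (sq_nonneg w), Real.sqrt_sq_eq_abs]
  have tri : ‖u‖ ≤ ‖u + z‖ + ‖z‖ := by
    calc ‖u‖ = ‖(u + z) + (-z)‖ := by rw [add_neg_cancel_right]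
      _ ≤ ‖u + z‖ + ‖-z‖ := norm_add_le _ _
      _ = ‖u + z‖ + ‖z‖ := by rw [norm_neg]
  rw [hdecomp]
  have hxnn : (0:ℝ) ≤ ‖x‖ := norm_nonneg x
  nlinarith [hu, hz, tri]

end SSHAux


/-- in the trivial phase |v| > |w| > 0, the SSH matrix is invertible and its
smallest singular value is bounded below by |v| − |w|, uniformly in N. -/
theorem ssh_gapped_trivial_phase (v w : ℝ) (hw : 0 < |w|) (hvw : |w| < |v|) :
    ∀ N : ℕ, IsUnit (sshMatrix N v w) ∧
      ∀ x : EuclideanSpace ℝ (Fin (2 * N)),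
        (|v| - |w|) * ‖x‖ ≤ ‖Matrix.toEuclideanLin (sshMatrix N v w) x‖ := by
  intro N
  refine ⟨?_, fun x => SSHAux.norm_bound N v w x⟩
  rw [Matrix.isUnit_iff_isUnit_det, isUnit_iff_ne_zero]
  intro hdet
  obtain ⟨c, hc0, hc⟩ := (Matrix.exists_mulVec_eq_zero_iff).mpr hdet
  set x : EuclideanSpace ℝ (Fin (2 * N)) := (WithLp.equiv 2 _).symm c with hx_def
  have h0 : Matrix.toEuclideanLin (sshMatrix N v w) x = 0 := by
    rw [hx_def, WithLp.equiv_symm_apply, Matrix.toEuclideanLin_apply_piLp_toLp, hc]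
    simp
  have hb := SSHAux.norm_bound N v w x
  rw [h0, norm_zero] at hb
  have hxpos : 0 < ‖x‖ := by
    rw [norm_pos_iff]
    intro h
    apply hc0
    have h2 : (WithLp.equiv 2 _) x = c := by simp [hx_def]
    rw [← h2, h]
    simp
  nlinarith [hb, hxpos, hvw]
end
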